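/- Let (x*, λ*) be an eigenpair of a symmetric tensor T of order m, and let A(x*) = H(x*) − m λ* x* (x*)^T where H(x*) = (m−1)T(I,I,x*,...,x*) − λ* I. Then A(x*) is symmetric with x* an eigenvector of eigenvalue −2λ*, and its remaining n−1 eigenvalues coincide with those of the projected Hessian H_p(x*) = U^T H(x*) U, where the columns of U span the orthogonal complement of x*. -/

import Mathlib

open scoped RealInnerProductSpace
open Finset Matrix

noncomputable section

/-- Euclidean space `ℝ^n`. -/
abbrev Evec (n : ℕ) := EuclideanSpace ℝ (Fin n)

/-- Interpret a plain function as a vector in `ℝ^n` (with the Euclidean norm). -/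
def toE {n : ℕ} (v : Fin n → ℝ) : Evec n := (WithLp.equiv 2 (Fin n → ℝ)).symm v

/-- An order-`m` tensor on `ℝ^n`, viewed as an `m`-multilinear form. -/
abbrev SymTensor (n m : ℕ) := MultilinearMap ℝ (fun _ : Fin m => Evec n) ℝ

/-- The tensor is symmetric: invariant under permutations of its `m` slots. -/
def IsSymT {n m : ℕ} (T : SymTensor n m) : Prop :=
  ∀ (σ : Equiv.Perm (Fin m)) (v : Fin m → Evec n), (T fun i => v (σ i)) = T v

/-- `μ(x) = T(x,…,x)`. -/
def tmu {n m : ℕ} (T : SymTensor n m) (x : Evec n) : ℝ := T fun _ => x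

/-- `T(I,x,…,x)`: the vector whose `i`-th entry is `T(eᵢ,x,…,x)`. -/
def tvec {n m : ℕ} (T : SymTensor n m) (x : Evec n) : Evec n :=
  toE fun i => T fun k => if (k : ℕ) = 0 then EuclideanSpace.single i 1 else x

/-- `T(I,I,x,…,x)`: the matrix whose `(i,j)` entry is `T(eᵢ,eⱼ,x,…,x)`. -/
def tmat {n m : ℕ} (T : SymTensor n m) (x : Evec n) : Matrix (Fin n) (Fin n) ℝ :=
  Matrix.of fun i j => T fun k =>
    if (k : ℕ) = 0 then EuclideanSpace.single i 1
    else if (k : ℕ) = 1 then EuclideanSpace.single j 1 else x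

/-- The gradient `g(x) = T(I,x,…,x) − μ(x) x`. -/
def gvec {n m : ℕ} (T : SymTensor n m) (x : Evec n) : Evec n := tvec T x - tmu T x • x

/-- The Hessian `H = (m−1) T(I,I,x,…,x) − λ I` (with the eigenvalue `λ` given). -/
def HmatL {n m : ℕ} (T : SymTensor n m) (x : Evec n) (lam : ℝ) :
    Matrix (Fin n) (Fin n) ℝ :=
  ((m : ℝ) - 1) • tmat T x - lam • (1 : Matrix (Fin n) (Fin n) ℝ)

/-- `(x,λ)` is a (real, unit-norm) eigenpair of `T`: `T(I,x,…,x) = λ x`, `‖x‖ = 1`. -/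
def IsEigenpair {n m : ℕ} (T : SymTensor n m) (x : Evec n) (lam : ℝ) : Prop :=
  tvec T x = lam • x ∧ ‖x‖ = 1

/-- at an eigenpair `(x*, λ*)`, the matrix
`A(x*) = H(x*) − m λ* x* (x*)ᵀ` is symmetric, has `x*` as an eigenvector with
eigenvalue `−2λ*`, and its remaining `n−1` eigenvalues coincide with those of the
projected Hessian `H_p(x*) = Uᵀ H(x*) U` — expressed by the spectral decomposition
`A = U (Uᵀ H U) Uᵀ − 2λ* x*(x*)ᵀ`. -/
theorem stmt_5 {n m : ℕ} (hm : 2 ≤ m) (T : SymTensor n m) (hT : IsSymT T)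
    (x : Evec n) (lam : ℝ) (h : IsEigenpair T x lam)
    (U : Matrix (Fin n) (Fin (n - 1)) ℝ) (hU : Uᵀ * U = 1)
    (hUx : U * Uᵀ = 1 - Matrix.vecMulVec (fun i => x i) (fun i => x i)) :
    (HmatL T x lam
        - ((m : ℝ) * lam) • Matrix.vecMulVec (fun i => x i) (fun i => x i)).IsSymm ∧
    (HmatL T x lam
        - ((m : ℝ) * lam) • Matrix.vecMulVec (fun i => x i) (fun i => x i)).mulVec
        (fun i => x i) = (-(2 * lam)) • (fun i => x i) ∧
    HmatL T x lam - ((m : ℝ) * lam) • Matrix.vecMulVec (fun i => x i) (fun i => x i)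
      = U * (Uᵀ * HmatL T x lam * U) * Uᵀ
        - (2 * lam) • Matrix.vecMulVec (fun i => x i) (fun i => x i) := by
  
  obtain ⟨heig, hnorm⟩ := h
  have h0 : 0 < m := by omega
  have h1 : 1 < m := by omega
  set k0 : Fin m := ⟨0, h0⟩ with hk0def
  set k1 : Fin m := ⟨1, h1⟩ with hk1def
  set x' : Fin n → ℝ := fun i => x i with hx'def
  set M := tmat T x with hMdef
  set P := Matrix.vecMulVec x' x' with hPdef
  -- sum of squares = 1
  have hsum : ∑ k, x' k * x' k = 1 := by
    have := real_inner_self_eq_norm_sq x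
    rw [hnorm] at this
    rw [← one_pow 2, ← this, PiLp.inner_apply]
    simp only [RCLike.inner_apply, conj_trivial, hx'def]
  -- basis expansion
  have hbasis : x = ∑ j, x j • EuclideanSpace.single j 1 := by
    ext i
    rw [show ((∑ j, x j • EuclideanSpace.single j (1:ℝ)) i)
        = ∑ j, (x j • EuclideanSpace.single j (1:ℝ)) i from by rw [WithLp.ofLp_sum]; exact Finset.sum_apply i _ _]
    simp [EuclideanSpace.single_apply]
  -- symmetry of M
  have hMkey : ∀ i j : Fin n, M i j = M j i := by
    intro i j
    have hperm := hT (Equiv.swap k0 k1)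
      (fun k => if (k:ℕ) = 0 then (EuclideanSpace.single j 1 : Evec n)
        else if (k:ℕ) = 1 then EuclideanSpace.single i 1 else x)
    have harg : (fun k => (fun k => if (k:ℕ) = 0 then (EuclideanSpace.single j 1 : Evec n)
        else if (k:ℕ) = 1 then EuclideanSpace.single i 1 else x) (Equiv.swap k0 k1 k))
        = fun k : Fin m => if (k:ℕ) = 0 then (EuclideanSpace.single i 1 : Evec n)
        else if (k:ℕ) = 1 then EuclideanSpace.single j 1 else x := by
      funext k
      rcases eq_or_ne k k0 with rfl | hk0
      · simp [Equiv.swap_apply_left, hk0def, hk1def]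
      rcases eq_or_ne k k1 with rfl | hk1
      · simp [Equiv.swap_apply_right, hk0def, hk1def]
      · have hne0 : (k:ℕ) ≠ 0 := fun hh => hk0 (Fin.ext hh)
        have hne1 : (k:ℕ) ≠ 1 := fun hh => hk1 (Fin.ext hh)
        rw [Equiv.swap_apply_of_ne_of_ne hk0 hk1]
        simp [hne0, hne1]
    rw [harg] at hperm
    simp only [hMdef, tmat, Matrix.of_apply]
    exact hperm
  -- M x = lam x componentwise
  have hMxi : ∀ i, ∑ k, M i k * x' k = lam * x' i := by
    intro i
    set w : Fin m → Evec n := fun k =>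
      if (k:ℕ) = 0 then EuclideanSpace.single i 1 else x with hwdef
    have hw : ∀ j : Fin n,
        M i j = T (Function.update w k1 (EuclideanSpace.single j 1)) := by
      intro j
      show T _ = _
      congr 1
      funext k
      rcases eq_or_ne k k1 with rfl | hk1
      · simp [hwdef, hk1def, Function.update_self]
      · have hne1 : (k:ℕ) ≠ 1 := fun hh => hk1 (Fin.ext hh)
        simp [Function.update_of_ne hk1, hwdef, hne1]
    have hself : Function.update w k1 x = w := by
      funext k
      rcases eq_or_ne k k1 with rfl | hk1
      · simp [hwdef, hk1def, Function.update_self]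
      · rw [Function.update_of_ne hk1]
    have step : ∑ j, x j • T (Function.update w k1 (EuclideanSpace.single j 1))
        = T w := by
      have hterm : ∀ j, x j • T (Function.update w k1 (EuclideanSpace.single j 1))
          = T (Function.update w k1 (x j • EuclideanSpace.single j 1)) := fun j =>
        (T.map_update_smul w k1 (x j) _).symm
      rw [Finset.sum_congr rfl (fun j _ => hterm j), ← T.map_update_sum, ← hbasis, hself]
    have htv : T w = lam * x' i := by
      have := congrFun (congrArg (WithLp.equiv 2 (Fin n → ℝ)) heig) i
      simpa [tvec, toE, hwdef, hx'def] using this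
    calc ∑ k, M i k * x' k
        = ∑ j, x j • T (Function.update w k1 (EuclideanSpace.single j 1)) := by
          refine Finset.sum_congr rfl fun j _ => ?_
          rw [hw j, smul_eq_mul, mul_comm]
      _ = T w := step
      _ = lam * x' i := htv
  have hMP : M * P = lam • P := by
    ext i j
    simp only [Matrix.mul_apply, Matrix.vecMulVec_apply, Matrix.smul_apply, smul_eq_mul,
      hPdef]
    calc ∑ k, M i k * (x' k * x' j) = (∑ k, M i k * x' k) * x' j := by
          rw [Finset.sum_mul]; exact Finset.sum_congr rfl fun k _ => by ring
      _ = lam * (x' i * x' j) := by rw [hMxi]; ring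
  have hPM : P * M = lam • P := by
    ext i j
    simp only [Matrix.mul_apply, Matrix.vecMulVec_apply, Matrix.smul_apply, smul_eq_mul,
      hPdef]
    calc ∑ k, x' i * x' k * M k j = x' i * ∑ k, M j k * x' k := by
          rw [Finset.mul_sum]
          exact Finset.sum_congr rfl fun k _ => by rw [hMkey k j]; ring
      _ = lam * (x' i * x' j) := by rw [hMxi]; ring
  have hPP : P * P = P := by
    ext i j
    simp only [Matrix.mul_apply, Matrix.vecMulVec_apply, hPdef]
    calc ∑ k, x' i * x' k * (x' k * x' j) = (x' i * x' j) * ∑ k, x' k * x' k := by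
          rw [Finset.mul_sum]; exact Finset.sum_congr rfl fun k _ => by ring
      _ = x' i * x' j := by rw [hsum, mul_one]
  set H := HmatL T x lam with hHdef
  have hHeq : H = ((m : ℝ) - 1) • M - lam • (1 : Matrix (Fin n) (Fin n) ℝ) := rfl
  have hHP : H * P = (((m : ℝ) - 2) * lam) • P := by
    rw [hHeq, Matrix.sub_mul, Matrix.smul_mul, Matrix.smul_mul, Matrix.one_mul, hMP]
    module
  have hPH : P * H = (((m : ℝ) - 2) * lam) • P := by
    rw [hHeq, Matrix.mul_sub, Matrix.mul_smul, Matrix.mul_smul, Matrix.mul_one, hPM]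
    module
  refine ⟨?_, ?_, ?_⟩
  · -- symmetry
    show (H - ((m : ℝ) * lam) • P)ᵀ = H - ((m : ℝ) * lam) • P
    have hMT : Mᵀ = M := by ext i j; exact hMkey j i
    have hPT : Pᵀ = P := by
      ext i j
      simp only [Matrix.transpose_apply, Matrix.vecMulVec_apply, hPdef]
      ring
    rw [Matrix.transpose_sub, Matrix.transpose_smul, hPT, hHeq, Matrix.transpose_sub,
      Matrix.transpose_smul, Matrix.transpose_smul, hMT, Matrix.transpose_one]
  · -- eigenvector
    have hPx : P.mulVec x' = x' := by
      funext i
      simp only [Matrix.mulVec, dotProduct, Matrix.vecMulVec_apply, hPdef]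
      calc ∑ k, x' i * x' k * x' k = x' i * ∑ k, x' k * x' k := by
            rw [Finset.mul_sum]; exact Finset.sum_congr rfl fun k _ => by ring
        _ = x' i := by rw [hsum, mul_one]
    have hMx : M.mulVec x' = lam • x' := by
      funext i
      simpa [Matrix.mulVec, dotProduct] using hMxi i
    rw [Matrix.sub_mulVec, Matrix.smul_mulVec, hPx, hHeq, Matrix.sub_mulVec,
      Matrix.smul_mulVec, Matrix.smul_mulVec, Matrix.one_mulVec, hMx]
    module
  · -- decomposition
    have hassoc : U * (Uᵀ * H * U) * Uᵀ = (U * Uᵀ) * H * (U * Uᵀ) := by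
      simp only [Matrix.mul_assoc]
    rw [hassoc, hUx]
    show H - ((m : ℝ) * lam) • P = (1 - P) * H * (1 - P) - (2 * lam) • P
    simp only [Matrix.mul_sub, Matrix.sub_mul, Matrix.mul_one, Matrix.one_mul,
      Matrix.mul_assoc, hHP, hPH, Matrix.mul_smul, Matrix.smul_mul, hPP]
    module
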